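/- Let r > 1/2. There exists a constant c > 0, depending only on r, such that for every τ ≥ 0 and all sequences α, β : ℤ → ℂ with ‖α‖_r < ∞ and ‖β‖_r < ∞, the sequence W : ℤ → ℂ defined by W_k = Σ_{k₁+k₂+k₃=k} ( conj(α_{k₁}) α_{k₂} α_{k₃} − conj(β_{k₁}) β_{k₂} β_{k₃} ) ∫₀^τ e^{2is k₂ k₃} ds (the inner sum over all (k₁,k₂,k₃) ∈ ℤ³ with k₁+k₂+k₃ = k converges absolutely) satisfies ‖W‖_r ≤ c τ (‖α‖_r + ‖β‖_r)² ‖α − β‖_r. (This is the Lipschitz estimate for the integral term J₂^τ of the second-order Fourier integrator, at the level of Fourier coefficients.) -/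

import Mathlib

open scoped ENNReal

/-- Weighted `H^r`-type norm of a sequence of Fourier coefficients. -/
noncomputable def wnorm (r : ℝ) (a : ℤ → ℂ) : ℝ :=
  Real.sqrt (∑' k : ℤ, (1 + |(k : ℝ)|) ^ (2 * r) * Norm.norm (a k) ^ 2)

namespace Stmt11Aux

lemma ennreal_cs {ι : Type*} [MeasurableSpace ι] [MeasurableSingletonClass ι] [Countable ι]
    (f g : ι → ℝ≥0∞) :
    (∑' i, f i * g i) ^ 2 ≤ (∑' i, f i ^ 2) * (∑' i, g i ^ 2) := by
  have hpq : Real.HolderConjugate 2 2 := Real.HolderConjugate.two_two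
  have h := ENNReal.lintegral_mul_le_Lp_mul_Lq (MeasureTheory.Measure.count (α := ι)) hpq
    (measurable_of_countable f).aemeasurable (measurable_of_countable g).aemeasurable
  rw [MeasureTheory.lintegral_count, MeasureTheory.lintegral_count,
    MeasureTheory.lintegral_count] at h
  have h2 : (∑' i, f i * g i) ≤ (∑' i, f i ^ 2) ^ (1/2 : ℝ) * (∑' i, g i ^ 2) ^ (1/2 : ℝ) := by
    calc (∑' i, f i * g i) ≤ (∑' i, f i ^ (2:ℝ)) ^ (1/2 : ℝ) * (∑' i, g i ^ (2:ℝ)) ^ (1/2 : ℝ) := h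
    _ = (∑' i, f i ^ 2) ^ (1/2 : ℝ) * (∑' i, g i ^ 2) ^ (1/2 : ℝ) := by norm_cast
  calc (∑' i, f i * g i) ^ 2
      ≤ ((∑' i, f i ^ 2) ^ (1/2 : ℝ) * (∑' i, g i ^ 2) ^ (1/2 : ℝ)) ^ 2 := pow_le_pow_left' h2 2
    _ = (∑' i, f i ^ 2) * (∑' i, g i ^ 2) := by
        rw [mul_pow, ← ENNReal.rpow_natCast ((∑' i, f i ^ 2) ^ (1/2:ℝ)),
          ← ENNReal.rpow_natCast ((∑' i, g i ^ 2) ^ (1/2:ℝ)), ← ENNReal.rpow_mul,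
          ← ENNReal.rpow_mul]
        norm_num

noncomputable def wE (r : ℝ) (k : ℤ) : ℝ≥0∞ := ENNReal.ofReal ((1 + |(k : ℝ)|) ^ r)

lemma wE_pos (r : ℝ) (k : ℤ) : 0 < (1 + |(k : ℝ)|) ^ r :=
  Real.rpow_pos_of_pos (by positivity) r

lemma wE_ne_zero (r : ℝ) (k : ℤ) : wE r k ≠ 0 := by
  simp [wE, ENNReal.ofReal_eq_zero, not_le, wE_pos r k]

lemma wE_ne_top (r : ℝ) (k : ℤ) : wE r k ≠ ⊤ := ENNReal.ofReal_ne_top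

lemma real_triple (r : ℝ) (hr : 0 ≤ r) {a b c k : ℤ} (h : k = a + b + c) :
    (1 + |(k : ℝ)|) ^ r ≤ 3 ^ r * ((1 + |(a : ℝ)|) ^ r + (1 + |(b : ℝ)|) ^ r + (1 + |(c : ℝ)|) ^ r) := by
  set x := (1 + |(a : ℝ)|)
  set y := (1 + |(b : ℝ)|)
  set z := (1 + |(c : ℝ)|)
  have hx : (1:ℝ) ≤ x := le_add_of_nonneg_right (abs_nonneg _)
  have hy : (1:ℝ) ≤ y := le_add_of_nonneg_right (abs_nonneg _)
  have hz : (1:ℝ) ≤ z := le_add_of_nonneg_right (abs_nonneg _)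
  have hm : (1 + |(k : ℝ)|) ≤ 3 * max x (max y z) := by
    have h1 : |(k:ℝ)| ≤ |(a:ℝ)| + |(b:ℝ)| + |(c:ℝ)| := by
      rw [h]; push_cast; exact (abs_add_three _ _ _)
    have hx' : x ≤ max x (max y z) := le_max_left _ _
    have hy' : y ≤ max x (max y z) := le_trans (le_max_left _ _) (le_max_right _ _)
    have hz' : z ≤ max x (max y z) := le_trans (le_max_right _ _) (le_max_right _ _)
    have : 1 + |(k:ℝ)| ≤ x + y + z := by simp only [x, y, z]; linarith [abs_nonneg (a:ℝ)]
    linarith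
  have hble : (1 + |(k : ℝ)|) ^ r ≤ (3 * max x (max y z)) ^ r :=
    Real.rpow_le_rpow (by positivity) hm hr
  have hmul : (3 * max x (max y z)) ^ r = 3 ^ r * (max x (max y z)) ^ r :=
    Real.mul_rpow (by norm_num) (by positivity)
  have hmax : (max x (max y z)) ^ r ≤ x ^ r + y ^ r + z ^ r := by
    rcases max_cases x (max y z) with ⟨h1, _⟩ | ⟨h1, _⟩
    · rw [h1]
      have := Real.rpow_nonneg (le_trans zero_le_one hy) r
      have := Real.rpow_nonneg (le_trans zero_le_one hz) r
      linarith
    · rcases max_cases y z with ⟨h2, _⟩ | ⟨h2, _⟩ <;> rw [h1, h2] <;>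
      · have := Real.rpow_nonneg (le_trans zero_le_one hx) r
        have := Real.rpow_nonneg (le_trans zero_le_one hy) r
        have := Real.rpow_nonneg (le_trans zero_le_one hz) r
        linarith
  calc (1 + |(k : ℝ)|) ^ r ≤ 3 ^ r * (max x (max y z)) ^ r := by rw [← hmul]; exact hble
    _ ≤ 3 ^ r * (x ^ r + y ^ r + z ^ r) := by
        have : (0:ℝ) ≤ 3 ^ r := Real.rpow_nonneg (by norm_num) r
        nlinarith [hmax]

lemma wE_triple (r : ℝ) (hr : 0 ≤ r) {a b c k : ℤ} (h : k = a + b + c) :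
    wE r k ≤ ENNReal.ofReal (3 ^ r) * (wE r a + wE r b + wE r c) := by
  rw [wE, wE, wE, wE, ← ENNReal.ofReal_add (le_of_lt (wE_pos r a)) (le_of_lt (wE_pos r b)),
    ← ENNReal.ofReal_add (by positivity) (le_of_lt (wE_pos r c)),
    ← ENNReal.ofReal_mul (Real.rpow_nonneg (by norm_num) r)]
  exact ENNReal.ofReal_le_ofReal (real_triple r hr h)

noncomputable def Φ (u v z : ℤ → ℝ≥0∞) (k : ℤ) : ℝ≥0∞ :=
  ∑' p : ℤ × ℤ, u p.1 * v p.2 * z (k - p.1 - p.2)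

def cyc (k : ℤ) : ℤ × ℤ ≃ ℤ × ℤ where
  toFun p := (k - p.1 - p.2, p.1)
  invFun q := (q.2, k - q.1 - q.2)
  left_inv p := by ext <;> simp <;> omega
  right_inv q := by ext <;> simp <;> ring

lemma Φ_cyc (u v z : ℤ → ℝ≥0∞) (k : ℤ) : Φ u v z k = Φ z u v k := by
  rw [Φ, Φ, ← Equiv.tsum_eq (cyc k) (fun q : ℤ × ℤ => z q.1 * u q.2 * v (k - q.1 - q.2))]
  apply tsum_congr
  intro p
  simp only [cyc, Equiv.coe_fn_mk]
  have h2 : k - (k - p.1 - p.2) - p.1 = p.2 := by ring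
  rw [h2]; ring

lemma half_sq (x : ℝ≥0∞) : (x ^ (1/2 : ℝ)) ^ 2 = x := by
  rw [← ENNReal.rpow_natCast (x ^ (1/2:ℝ)), ← ENNReal.rpow_mul]; norm_num

lemma tsum_prod_mul (u v : ℤ → ℝ≥0∞) :
    ∑' p : ℤ × ℤ, u p.1 * v p.2 = (∑' m, u m) * (∑' m, v m) := by
  rw [ENNReal.tsum_prod']
  simp only [ENNReal.tsum_mul_left, ENNReal.tsum_mul_right]

lemma Y3 (u v z : ℤ → ℝ≥0∞) :
    ∑' k : ℤ, (Φ u v z k) ^ 2 ≤ (∑' m, u m) ^ 2 * (∑' m, v m) ^ 2 * ∑' m, (z m) ^ 2 := by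
  set G : ℤ × ℤ → ℝ≥0∞ := fun p => u p.1 * v p.2 with hGdef
  have hG : ∑' p : ℤ × ℤ, G p = (∑' m, u m) * (∑' m, v m) := tsum_prod_mul u v
  have key : ∀ k : ℤ, (Φ u v z k) ^ 2 ≤
      (∑' p : ℤ × ℤ, G p) * ∑' p : ℤ × ℤ, G p * z (k - p.1 - p.2) ^ 2 := by
    intro k
    have h := ennreal_cs (fun p : ℤ × ℤ => (G p) ^ (1/2:ℝ))
      (fun p : ℤ × ℤ => (G p) ^ (1/2:ℝ) * z (k - p.1 - p.2))
    have e1 : ∀ p : ℤ × ℤ, (G p) ^ (1/2:ℝ) * ((G p) ^ (1/2:ℝ) * z (k - p.1 - p.2))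
        = G p * z (k - p.1 - p.2) := by
      intro p; rw [← mul_assoc, ← sq, half_sq]
    have e2 : ∀ p : ℤ × ℤ, ((G p) ^ (1/2:ℝ) * z (k - p.1 - p.2)) ^ 2
        = G p * z (k - p.1 - p.2) ^ 2 := by
      intro p; rw [mul_pow, half_sq]
    simp only [e1, e2, half_sq] at h
    exact le_trans (le_of_eq (by rw [Φ])) h
  calc ∑' k : ℤ, (Φ u v z k) ^ 2
      ≤ ∑' k : ℤ, (∑' p : ℤ × ℤ, G p) * ∑' p : ℤ × ℤ, G p * z (k - p.1 - p.2) ^ 2 :=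
        ENNReal.tsum_le_tsum key
    _ = (∑' p : ℤ × ℤ, G p) * ∑' k : ℤ, ∑' p : ℤ × ℤ, G p * z (k - p.1 - p.2) ^ 2 :=
        ENNReal.tsum_mul_left
    _ = (∑' p : ℤ × ℤ, G p) * ∑' p : ℤ × ℤ, ∑' k : ℤ, G p * z (k - p.1 - p.2) ^ 2 := by
        rw [ENNReal.tsum_comm]
    _ = (∑' p : ℤ × ℤ, G p) * ∑' p : ℤ × ℤ, G p * ∑' m, (z m) ^ 2 := by
        congr 1
        apply tsum_congr
        intro p
        rw [ENNReal.tsum_mul_left]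
        congr 1
        have : ∀ k : ℤ, z (k - p.1 - p.2) ^ 2 = (fun m => z m ^ 2) ((Equiv.subRight (p.1 + p.2)) k) := by
          intro k; simp [Equiv.subRight]; congr 1; ring
        rw [tsum_congr this, Equiv.tsum_eq (Equiv.subRight (p.1 + p.2)) (fun m => z m ^ 2)]
    _ = (∑' m, u m) ^ 2 * (∑' m, v m) ^ 2 * ∑' m, (z m) ^ 2 := by
        rw [ENNReal.tsum_mul_right, hG, ← mul_assoc, ← sq, mul_pow]

lemma ell1 (r : ℝ) (u : ℤ → ℝ≥0∞) :
    (∑' k, u k) ^ 2 ≤ (∑' k : ℤ, ((wE r k)⁻¹) ^ 2) * ∑' k, (wE r k * u k) ^ 2 := by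
  have h := ennreal_cs (fun k : ℤ => (wE r k)⁻¹) (fun k => wE r k * u k)
  have e : ∀ k : ℤ, (wE r k)⁻¹ * (wE r k * u k) = u k := by
    intro k
    rw [← mul_assoc, ENNReal.inv_mul_cancel (wE_ne_zero r k) (wE_ne_top r k), one_mul]
  simpa only [e] using h

lemma weight_split (r : ℝ) (hr : 0 ≤ r) (u v z : ℤ → ℝ≥0∞) (k : ℤ) :
    wE r k * Φ u v z k ≤ ENNReal.ofReal (3 ^ r) *
      (Φ (fun m => wE r m * u m) v z k + Φ u (fun m => wE r m * v m) z k
        + Φ u v (fun m => wE r m * z m) k) := by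
  rw [Φ, ← ENNReal.tsum_mul_left]
  have step : ∀ p : ℤ × ℤ, wE r k * (u p.1 * v p.2 * z (k - p.1 - p.2)) ≤
      ENNReal.ofReal (3 ^ r) *
        ((wE r p.1 * u p.1) * v p.2 * z (k - p.1 - p.2)
          + u p.1 * (wE r p.2 * v p.2) * z (k - p.1 - p.2)
          + u p.1 * v p.2 * (wE r (k - p.1 - p.2) * z (k - p.1 - p.2))) := by
    intro p
    have h3 := wE_triple r hr (a := p.1) (b := p.2) (c := k - p.1 - p.2) (k := k) (by ring)
    calc wE r k * (u p.1 * v p.2 * z (k - p.1 - p.2))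
        ≤ (ENNReal.ofReal (3 ^ r) * (wE r p.1 + wE r p.2 + wE r (k - p.1 - p.2))) *
            (u p.1 * v p.2 * z (k - p.1 - p.2)) := mul_le_mul_left h3 _
      _ = ENNReal.ofReal (3 ^ r) *
        ((wE r p.1 * u p.1) * v p.2 * z (k - p.1 - p.2)
          + u p.1 * (wE r p.2 * v p.2) * z (k - p.1 - p.2)
          + u p.1 * v p.2 * (wE r (k - p.1 - p.2) * z (k - p.1 - p.2))) := by ring
  calc ∑' p : ℤ × ℤ, wE r k * (u p.1 * v p.2 * z (k - p.1 - p.2))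
      ≤ ∑' p : ℤ × ℤ, ENNReal.ofReal (3 ^ r) *
        ((wE r p.1 * u p.1) * v p.2 * z (k - p.1 - p.2)
          + u p.1 * (wE r p.2 * v p.2) * z (k - p.1 - p.2)
          + u p.1 * v p.2 * (wE r (k - p.1 - p.2) * z (k - p.1 - p.2))) :=
        ENNReal.tsum_le_tsum step
    _ = ENNReal.ofReal (3 ^ r) *
      (Φ (fun m => wE r m * u m) v z k + Φ u (fun m => wE r m * v m) z k
        + Φ u v (fun m => wE r m * z m) k) := by
        rw [ENNReal.tsum_mul_left, Φ, Φ, Φ, ← ENNReal.tsum_add, ← ENNReal.tsum_add]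

lemma C1_summable {r : ℝ} (hr : 1 / 2 < r) :
    Summable (fun k : ℤ => (((1 + |(k : ℝ)|) ^ r)⁻¹) ^ 2) := by
  have h2r : 1 < 2 * r := by linarith
  have hnat : Summable (fun n : ℕ => ((n : ℝ) ^ (2 * r))⁻¹) :=
    Real.summable_nat_rpow_inv.mpr h2r
  have hsh : Summable (fun n : ℕ => (((n + 1 : ℕ) : ℝ) ^ (2 * r))⁻¹) :=
    (summable_nat_add_iff 1).mpr hnat
  have hform : ∀ x : ℝ, 0 ≤ x → ((x ^ r)⁻¹) ^ 2 = (x ^ (2 * r))⁻¹ := by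
    intro x hx
    rw [← Real.rpow_natCast (x ^ r)⁻¹ 2, ← Real.rpow_neg_one (x ^ r), ← Real.rpow_mul hx,
      ← Real.rpow_mul hx, ← Real.rpow_neg_one (x ^ (2 * r)), ← Real.rpow_mul hx]
    congr 1
    push_cast
    ring
  have key : ∀ n : ℕ, (((1 + |((n : ℤ) : ℝ)|) ^ r)⁻¹) ^ 2 = (((n + 1 : ℕ) : ℝ) ^ (2 * r))⁻¹ := by
    intro n
    rw [hform _ (by positivity)]
    push_cast
    rw [abs_of_nonneg (by positivity : (0:ℝ) ≤ (n:ℝ)), add_comm]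
  apply Summable.of_nat_of_neg
  · exact hsh.congr (fun n => (key n).symm)
  · refine hsh.congr (fun n => ?_)
    rw [← key n]
    norm_num

lemma integral_bound {τ : ℝ} (hτ : 0 ≤ τ) (n : ℤ) :
    ‖∫ s in (0:ℝ)..τ, Complex.exp (2 * Complex.I * s * (n:ℂ))‖ ≤ τ := by
  have h := intervalIntegral.norm_integral_le_of_norm_le_const (C := 1) (a := (0:ℝ)) (b := τ)
    (f := fun s : ℝ => Complex.exp (2 * Complex.I * s * (n:ℂ))) ?_
  · simpa [abs_of_nonneg hτ] using h
  · intro x _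
    show ‖Complex.exp (2 * Complex.I * (x:ℂ) * (n:ℂ))‖ ≤ 1
    have e : (2 * Complex.I * (x:ℂ) * (n:ℂ)) = ((2 * x * n : ℝ) : ℂ) * Complex.I := by
      push_cast; ring
    rw [e, Complex.norm_exp]
    simp

lemma diff_bound (a1 a2 a3 b1 b2 b3 : ℂ) :
    Norm.norm ((starRingEnd ℂ) a1 * a2 * a3 - (starRingEnd ℂ) b1 * b2 * b3) ≤
      Norm.norm (a1 - b1) * Norm.norm a2 * Norm.norm a3
      + Norm.norm b1 * Norm.norm (a2 - b2) * Norm.norm a3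
      + Norm.norm b1 * Norm.norm b2 * Norm.norm (a3 - b3) := by
  have e : (starRingEnd ℂ) a1 * a2 * a3 - (starRingEnd ℂ) b1 * b2 * b3
      = (starRingEnd ℂ) (a1 - b1) * a2 * a3 + (starRingEnd ℂ) b1 * (a2 - b2) * a3
        + (starRingEnd ℂ) b1 * b2 * (a3 - b3) := by
    rw [map_sub]; ring
  rw [e]
  calc Norm.norm _ ≤ Norm.norm ((starRingEnd ℂ) (a1 - b1) * a2 * a3
        + (starRingEnd ℂ) b1 * (a2 - b2) * a3) + Norm.norm ((starRingEnd ℂ) b1 * b2 * (a3 - b3)) :=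
        norm_add_le _ _
    _ ≤ Norm.norm ((starRingEnd ℂ) (a1 - b1) * a2 * a3)
        + Norm.norm ((starRingEnd ℂ) b1 * (a2 - b2) * a3)
        + Norm.norm ((starRingEnd ℂ) b1 * b2 * (a3 - b3)) :=
        add_le_add_left (norm_add_le _ _) _
    _ = _ := by simp [norm_mul, Complex.norm_conj, ← map_sub]

lemma mul_le_sq_add_sq (a b : ℝ≥0∞) : a * b ≤ a ^ 2 + b ^ 2 := by
  rcases le_total a b with h | h
  · exact le_trans (by calc a * b ≤ b * b := mul_le_mul_left h b
                         _ = b ^ 2 := (sq b).symm) le_add_self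
  · exact le_trans (by calc a * b ≤ a * a := mul_le_mul_right h a
                         _ = a ^ 2 := (sq a).symm) le_self_add

lemma sq3 (x y z : ℝ≥0∞) : (x + y + z) ^ 2 ≤ 5 * (x ^ 2 + y ^ 2 + z ^ 2) := by
  have e : (x + y + z) ^ 2 = (x ^ 2 + y ^ 2 + z ^ 2) + 2 * (x * y) + 2 * (y * z) + 2 * (x * z) := by
    ring
  rw [e]
  calc (x ^ 2 + y ^ 2 + z ^ 2) + 2 * (x * y) + 2 * (y * z) + 2 * (x * z)
      ≤ (x ^ 2 + y ^ 2 + z ^ 2) + 2 * (x ^ 2 + y ^ 2) + 2 * (y ^ 2 + z ^ 2) + 2 * (x ^ 2 + z ^ 2) := by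
        gcongr <;> [exact mul_le_sq_add_sq x y; exact mul_le_sq_add_sq y z; exact mul_le_sq_add_sq x z]
    _ ≤ 5 * (x ^ 2 + y ^ 2 + z ^ 2) := by
        rw [show (5:ℝ≥0∞) * (x ^ 2 + y ^ 2 + z ^ 2) = (x ^ 2 + y ^ 2 + z ^ 2)
          + 2 * (x ^ 2 + y ^ 2) + 2 * (y ^ 2 + z ^ 2) + 2 * (x ^ 2 + z ^ 2) + 0 from by ring]
        exact le_add_of_nonneg_right zero_le

lemma group_bound (r : ℝ) (hr : 0 ≤ r) (x y z : ℤ → ℝ≥0∞) :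
    ∑' k : ℤ, (wE r k * Φ x y z k) ^ 2 ≤
      ENNReal.ofReal (3 ^ r) ^ 2 * 15 * ((∑' k : ℤ, ((wE r k)⁻¹) ^ 2) ^ 2 *
        ((∑' k, (wE r k * x k) ^ 2) * (∑' k, (wE r k * y k) ^ 2) * (∑' k, (wE r k * z k) ^ 2))) := by
  set K := ENNReal.ofReal (3 ^ r)
  set E := ∑' k : ℤ, ((wE r k)⁻¹) ^ 2
  set Nx := ∑' k, (wE r k * x k) ^ 2
  set Ny := ∑' k, (wE r k * y k) ^ 2
  set Nz := ∑' k, (wE r k * z k) ^ 2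
  set A : ℤ → ℝ≥0∞ := fun k => Φ (fun m => wE r m * x m) y z k
  set B : ℤ → ℝ≥0∞ := fun k => Φ x (fun m => wE r m * y m) z k
  set C : ℤ → ℝ≥0∞ := fun k => Φ x y (fun m => wE r m * z m) k
  have hA : ∑' k, (A k) ^ 2 ≤ E ^ 2 * (Nx * Ny * Nz) := by
    have he : ∀ k, A k = Φ y z (fun m => wE r m * x m) k := by
      intro k
      exact (Φ_cyc y z (fun m => wE r m * x m) k).symm
    calc ∑' k, (A k) ^ 2 = ∑' k, (Φ y z (fun m => wE r m * x m) k) ^ 2 := by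
          apply tsum_congr; intro k; rw [he k]
      _ ≤ (∑' m, y m) ^ 2 * (∑' m, z m) ^ 2 * Nx := Y3 _ _ _
      _ ≤ (E * Ny) * (E * Nz) * Nx := by
          gcongr <;> [exact ell1 r y; exact ell1 r z]
      _ = E ^ 2 * (Nx * Ny * Nz) := by ring
  have hB : ∑' k, (B k) ^ 2 ≤ E ^ 2 * (Nx * Ny * Nz) := by
    have he : ∀ k, B k = Φ z x (fun m => wE r m * y m) k := by
      intro k
      rw [show B k = Φ x (fun m => wE r m * y m) z k from rfl, Φ_cyc]
    calc ∑' k, (B k) ^ 2 = ∑' k, (Φ z x (fun m => wE r m * y m) k) ^ 2 := by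
          apply tsum_congr; intro k; rw [he k]
      _ ≤ (∑' m, z m) ^ 2 * (∑' m, x m) ^ 2 * Ny := Y3 _ _ _
      _ ≤ (E * Nz) * (E * Nx) * Ny := by
          gcongr <;> [exact ell1 r z; exact ell1 r x]
      _ = E ^ 2 * (Nx * Ny * Nz) := by ring
  have hC : ∑' k, (C k) ^ 2 ≤ E ^ 2 * (Nx * Ny * Nz) := by
    calc ∑' k, (C k) ^ 2 ≤ (∑' m, x m) ^ 2 * (∑' m, y m) ^ 2 * Nz := Y3 _ _ _
      _ ≤ (E * Nx) * (E * Ny) * Nz := by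
          gcongr <;> [exact ell1 r x; exact ell1 r y]
      _ = E ^ 2 * (Nx * Ny * Nz) := by ring
  calc ∑' k : ℤ, (wE r k * Φ x y z k) ^ 2
      ≤ ∑' k : ℤ, (K * (A k + B k + C k)) ^ 2 := by
        apply ENNReal.tsum_le_tsum
        intro k
        exact pow_le_pow_left' (weight_split r hr x y z k) 2
    _ = K ^ 2 * ∑' k : ℤ, (A k + B k + C k) ^ 2 := by
        rw [← ENNReal.tsum_mul_left]
        apply tsum_congr; intro k; rw [mul_pow]
    _ ≤ K ^ 2 * ∑' k : ℤ, 5 * ((A k) ^ 2 + (B k) ^ 2 + (C k) ^ 2) := by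
        gcongr
        exact sq3 _ _ _
    _ = K ^ 2 * (5 * ((∑' k, (A k) ^ 2) + (∑' k, (B k) ^ 2) + (∑' k, (C k) ^ 2))) := by
        rw [ENNReal.tsum_mul_left, ENNReal.tsum_add, ENNReal.tsum_add]
    _ ≤ K ^ 2 * (5 * (E ^ 2 * (Nx * Ny * Nz) + E ^ 2 * (Nx * Ny * Nz) + E ^ 2 * (Nx * Ny * Nz))) := by
        gcongr
    _ = K ^ 2 * 15 * (E ^ 2 * (Nx * Ny * Nz)) := by ring

lemma term_eq (r : ℝ) (k : ℤ) (x : ℂ) :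
    ENNReal.ofReal ((1 + |(k : ℝ)|) ^ (2 * r) * Norm.norm x ^ 2)
      = (wE r k * ENNReal.ofReal (Norm.norm x)) ^ 2 := by
  have hb : (0:ℝ) ≤ 1 + |(k:ℝ)| := by positivity
  have e1 : (1 + |(k:ℝ)|) ^ (2 * r) = ((1 + |(k:ℝ)|) ^ r) ^ 2 := by
    rw [← Real.rpow_natCast ((1 + |(k:ℝ)|) ^ r), ← Real.rpow_mul hb]
    norm_num [mul_comm]
  rw [e1, ← mul_pow, ENNReal.ofReal_pow (by positivity), ENNReal.ofReal_mul
    (le_of_lt (wE_pos r k)), wE]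

lemma Nlemma (r : ℝ) (γ : ℤ → ℂ)
    (hγ : Summable (fun k : ℤ => (1 + |(k : ℝ)|) ^ (2 * r) * Norm.norm (γ k) ^ 2)) :
    ∑' k : ℤ, (wE r k * ENNReal.ofReal (Norm.norm (γ k))) ^ 2
      = ENNReal.ofReal ((wnorm r γ) ^ 2) := by
  rw [wnorm, Real.sq_sqrt (tsum_nonneg (fun k => by positivity)),
    ENNReal.ofReal_tsum_of_nonneg (fun k => by positivity) hγ]
  exact tsum_congr (fun k => (term_eq r k (γ k)).symm)

lemma summable_of_tsum_ofReal_ne_top {ι : Type*} {f : ι → ℝ} (hf : ∀ i, 0 ≤ f i)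
    (h : ∑' i, ENNReal.ofReal (f i) ≠ ⊤) : Summable f := by
  have h2 : Summable (fun i => (f i).toNNReal) := by
    apply ENNReal.tsum_coe_ne_top_iff_summable.mp
    exact h
  exact (NNReal.summable_coe.mpr h2).congr (fun i => Real.coe_toNNReal _ (hf i))

lemma real_tsum_le_of_ofReal {ι : Type*} {f : ι → ℝ} (hf : ∀ i, 0 ≤ f i) {C : ℝ} (hC : 0 ≤ C)
    (h : ∑' i, ENNReal.ofReal (f i) ≤ ENNReal.ofReal C) : ∑' i, f i ≤ C := by
  have hs := summable_of_tsum_ofReal_ne_top hf (ne_top_of_le_ne_top ENNReal.ofReal_ne_top h)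
  rw [← ENNReal.ofReal_tsum_of_nonneg hf hs] at h
  exact (ENNReal.ofReal_le_ofReal_iff hC).mp h

lemma Φ_le (u v z : ℤ → ℝ≥0∞) (k : ℤ) :
    Φ u v z k ≤ (∑' m, u m) * (∑' m, v m) * (∑' m, z m) := by
  calc Φ u v z k ≤ ∑' p : ℤ × ℤ, u p.1 * v p.2 * (∑' m, z m) := by
        apply ENNReal.tsum_le_tsum
        intro p
        exact mul_le_mul_right (ENNReal.le_tsum _) _
    _ = (∑' m, u m) * (∑' m, v m) * (∑' m, z m) := by
        rw [ENNReal.tsum_mul_right, tsum_prod_mul]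

lemma sq_ne_top {x : ℝ≥0∞} (h : x ^ 2 ≠ ⊤) : x ≠ ⊤ := by
  intro hx
  rw [hx] at h
  simp at h


noncomputable def Tm (τ : ℝ) (α β : ℤ → ℂ) (k : ℤ) (p : ℤ × ℤ) : ℂ :=
  ((starRingEnd ℂ) (α p.1) * α p.2 * α (k - p.1 - p.2)
    - (starRingEnd ℂ) (β p.1) * β p.2 * β (k - p.1 - p.2)) *
  ∫ s in (0:ℝ)..τ, Complex.exp (2 * Complex.I * s * ((p.2 * (k - p.1 - p.2) : ℤ) : ℂ))

lemma ofReal_prod3 {x y z : ℝ} (hx : 0 ≤ x) (hy : 0 ≤ y) :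
    ENNReal.ofReal (x * y * z) = ENNReal.ofReal x * ENNReal.ofReal y * ENNReal.ofReal z := by
  rw [ENNReal.ofReal_mul (mul_nonneg hx hy), ENNReal.ofReal_mul hx]

lemma ofReal_sum3 {x y z : ℝ} (hx : 0 ≤ x) (hy : 0 ≤ y) (hz : 0 ≤ z) :
    ENNReal.ofReal (x + y + z) = ENNReal.ofReal x + ENNReal.ofReal y + ENNReal.ofReal z := by
  rw [ENNReal.ofReal_add (by linarith) hz, ENNReal.ofReal_add hx hy]

end Stmt11Aux

set_option maxHeartbeats 1000000 in
open Stmt11Aux in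
theorem stmt11 (r : ℝ) (hr : 1 / 2 < r) :
    ∃ c > 0, ∀ τ : ℝ, 0 ≤ τ → ∀ α β : ℤ → ℂ,
      Summable (fun k : ℤ => (1 + |(k : ℝ)|) ^ (2 * r) * Norm.norm (α k) ^ 2) →
      Summable (fun k : ℤ => (1 + |(k : ℝ)|) ^ (2 * r) * Norm.norm (β k) ^ 2) →
      (∀ k : ℤ, Summable (fun p : ℤ × ℤ =>
        Norm.norm (((starRingEnd ℂ) (α p.1) * α p.2 * α (k - p.1 - p.2)
            - (starRingEnd ℂ) (β p.1) * β p.2 * β (k - p.1 - p.2)) *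
          ∫ s in (0 : ℝ)..τ, Complex.exp (2 * Complex.I * s * ((p.2 * (k - p.1 - p.2) : ℤ) : ℂ))))) ∧
      wnorm r (fun k : ℤ => ∑' p : ℤ × ℤ,
          ((starRingEnd ℂ) (α p.1) * α p.2 * α (k - p.1 - p.2)
            - (starRingEnd ℂ) (β p.1) * β p.2 * β (k - p.1 - p.2)) *
          ∫ s in (0 : ℝ)..τ, Complex.exp (2 * Complex.I * s * ((p.2 * (k - p.1 - p.2) : ℤ) : ℂ)))
        ≤ c * τ * (wnorm r α + wnorm r β) ^ 2 * wnorm r (fun k => α k - β k) := by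
  have hr0 : 0 ≤ r := le_trans (by norm_num) (le_of_lt hr)
  have h3r : (0:ℝ) < 3 ^ r := Real.rpow_pos_of_pos (by norm_num) r
  set C1 : ℝ := ∑' k : ℤ, (((1 + |(k:ℝ)|) ^ r)⁻¹) ^ 2 with hC1def
  have hC1sum := C1_summable hr
  have hC1nonneg : 0 ≤ C1 := tsum_nonneg (fun k => by positivity)
  have hC1E : (∑' k : ℤ, ((wE r k)⁻¹) ^ 2) = ENNReal.ofReal C1 := by
    rw [hC1def, ENNReal.ofReal_tsum_of_nonneg (fun k => by positivity) hC1sum]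
    apply tsum_congr
    intro k
    rw [wE, ← ENNReal.ofReal_inv_of_pos (wE_pos r k), ← ENNReal.ofReal_pow (by positivity)]
  refine ⟨15 * 3 ^ r * (C1 + 1) + 1, by nlinarith, ?_⟩
  intro τ hτ α β hα hβ
  set a : ℤ → ℝ≥0∞ := fun k => ENNReal.ofReal (Norm.norm (α k)) with hadef
  set b : ℤ → ℝ≥0∞ := fun k => ENNReal.ofReal (Norm.norm (β k)) with hbdef
  set d : ℤ → ℝ≥0∞ := fun k => ENNReal.ofReal (Norm.norm (α k - β k)) with hddef
  have hδsum : Summable (fun k : ℤ => (1 + |(k:ℝ)|) ^ (2*r) * Norm.norm (α k - β k) ^ 2) := by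
    apply Summable.of_nonneg_of_le (fun k => by positivity) (fun k => ?_)
      ((hα.mul_left 2).add (hβ.mul_left 2))
    have htri : Norm.norm (α k - β k) ≤ Norm.norm (α k) + Norm.norm (β k) := by
      simpa using norm_sub_le (α k) (β k)
    have h1 : (0:ℝ) ≤ (1 + |(k:ℝ)|) ^ (2*r) := by positivity
    have h2 := norm_nonneg (α k - β k)
    have h3 := norm_nonneg (α k)
    have h4 := norm_nonneg (β k)
    have hD2 : Norm.norm (α k - β k) ^ 2
        ≤ 2 * Norm.norm (α k) ^ 2 + 2 * Norm.norm (β k) ^ 2 := by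
      nlinarith [mul_le_mul htri htri h2 (add_nonneg h3 h4),
        sq_nonneg (Norm.norm (α k) - Norm.norm (β k))]
    nlinarith [mul_le_mul_of_nonneg_left hD2 h1]
  have hNa : (∑' k : ℤ, (wE r k * a k) ^ 2) = ENNReal.ofReal (wnorm r α ^ 2) := by
    simp only [hadef]; exact Nlemma r α hα
  have hNb : (∑' k : ℤ, (wE r k * b k) ^ 2) = ENNReal.ofReal (wnorm r β ^ 2) := by
    simp only [hbdef]; exact Nlemma r β hβ
  have hNd : (∑' k : ℤ, (wE r k * d k) ^ 2)
      = ENNReal.ofReal (wnorm r (fun k => α k - β k) ^ 2) := by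
    simp only [hddef]; exact Nlemma r (fun k => α k - β k) hδsum
  have hfin : ∀ (u : ℤ → ℝ≥0∞) (x : ℝ), (∑' k, (wE r k * u k) ^ 2) = ENNReal.ofReal x →
      (∑' k, u k) ≠ ⊤ := by
    intro u x hx
    have h := ell1 r u
    rw [hx, hC1E] at h
    exact sq_ne_top (ne_top_of_le_ne_top
      (ENNReal.mul_ne_top ENNReal.ofReal_ne_top ENNReal.ofReal_ne_top) h)
  have hfa := hfin a _ hNa
  have hfb := hfin b _ hNb
  have hfd := hfin d _ hNd
  -- pointwise bound on the terms
  have hptw : ∀ (k : ℤ) (p : ℤ × ℤ), ENNReal.ofReal (Norm.norm (Tm τ α β k p)) ≤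
      ENNReal.ofReal τ * (d p.1 * a p.2 * a (k - p.1 - p.2)
        + b p.1 * d p.2 * a (k - p.1 - p.2) + b p.1 * b p.2 * d (k - p.1 - p.2)) := by
    intro k p
    simp only [hadef, hbdef, hddef]
    have hI : Norm.norm (∫ s in (0:ℝ)..τ,
        Complex.exp (2 * Complex.I * s * ((p.2 * (k - p.1 - p.2) : ℤ) : ℂ))) ≤ τ := by
      exact integral_bound hτ _
    have h1 : Norm.norm (Tm τ α β k p) ≤ τ *
        (Norm.norm (α p.1 - β p.1) * Norm.norm (α p.2) * Norm.norm (α (k - p.1 - p.2))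
        + Norm.norm (β p.1) * Norm.norm (α p.2 - β p.2) * Norm.norm (α (k - p.1 - p.2))
        + Norm.norm (β p.1) * Norm.norm (β p.2)
            * Norm.norm (α (k - p.1 - p.2) - β (k - p.1 - p.2))) := by
      rw [Tm, norm_mul]
      calc Norm.norm _ * Norm.norm _
          ≤ Norm.norm ((starRingEnd ℂ) (α p.1) * α p.2 * α (k - p.1 - p.2)
              - (starRingEnd ℂ) (β p.1) * β p.2 * β (k - p.1 - p.2)) * τ :=
            mul_le_mul_of_nonneg_left hI (norm_nonneg _)
        _ ≤ (Norm.norm (α p.1 - β p.1) * Norm.norm (α p.2) * Norm.norm (α (k - p.1 - p.2))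
            + Norm.norm (β p.1) * Norm.norm (α p.2 - β p.2) * Norm.norm (α (k - p.1 - p.2))
            + Norm.norm (β p.1) * Norm.norm (β p.2)
                * Norm.norm (α (k - p.1 - p.2) - β (k - p.1 - p.2))) * τ :=
            mul_le_mul_of_nonneg_right (diff_bound _ _ _ _ _ _) hτ
        _ = _ := mul_comm _ _
    refine le_trans (ENNReal.ofReal_le_ofReal h1) (le_of_eq ?_)
    rw [ENNReal.ofReal_mul hτ]
    congr 1
    rw [ofReal_sum3 (by positivity) (by positivity) (by positivity),
      ofReal_prod3 (norm_nonneg _) (norm_nonneg _),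
      ofReal_prod3 (norm_nonneg _) (norm_nonneg _),
      ofReal_prod3 (norm_nonneg _) (norm_nonneg _)]
  have hsump : ∀ k : ℤ, (∑' p : ℤ × ℤ, ENNReal.ofReal (Norm.norm (Tm τ α β k p))) ≤
      ENNReal.ofReal τ * (Φ d a a k + Φ b d a k + Φ b b d k) := by
    intro k
    refine le_trans (ENNReal.tsum_le_tsum (hptw k)) (le_of_eq ?_)
    rw [ENNReal.tsum_mul_left]
    congr 1
    simp only [Φ]
    rw [ENNReal.tsum_add, ENNReal.tsum_add]
  have hTfin : ∀ k : ℤ, (∑' p : ℤ × ℤ, ENNReal.ofReal (Norm.norm (Tm τ α β k p))) ≠ ⊤ := by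
    intro k
    refine ne_top_of_le_ne_top ?_ (hsump k)
    refine ENNReal.mul_ne_top ENNReal.ofReal_ne_top ?_
    have f1 := ne_top_of_le_ne_top
      (ENNReal.mul_ne_top (ENNReal.mul_ne_top hfd hfa) hfa) (Φ_le d a a k)
    have f2 := ne_top_of_le_ne_top
      (ENNReal.mul_ne_top (ENNReal.mul_ne_top hfb hfd) hfa) (Φ_le b d a k)
    have f3 := ne_top_of_le_ne_top
      (ENNReal.mul_ne_top (ENNReal.mul_ne_top hfb hfb) hfd) (Φ_le b b d k)
    exact ENNReal.add_ne_top.mpr ⟨ENNReal.add_ne_top.mpr ⟨f1, f2⟩, f3⟩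
  have hsummable : ∀ k : ℤ, Summable (fun p : ℤ × ℤ => Norm.norm (Tm τ α β k p)) :=
    fun k => summable_of_tsum_ofReal_ne_top (fun p => norm_nonneg _) (hTfin k)
  refine ⟨hsummable, ?_⟩
  -- now the norm estimate
  have hW : ∀ k : ℤ, ENNReal.ofReal (Norm.norm (∑' p : ℤ × ℤ, Tm τ α β k p)) ≤
      ∑' p : ℤ × ℤ, ENNReal.ofReal (Norm.norm (Tm τ α β k p)) := by
    intro k
    have hsn : Summable (fun p : ℤ × ℤ => ‖Tm τ α β k p‖) :=
      (hsummable k).congr (fun p => rfl)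
    have hnorm : ‖∑' p : ℤ × ℤ, Tm τ α β k p‖ ≤ ∑' p : ℤ × ℤ, ‖Tm τ α β k p‖ :=
      norm_tsum_le_tsum_norm hsn
    calc ENNReal.ofReal (Norm.norm (∑' p : ℤ × ℤ, Tm τ α β k p))
        = ENNReal.ofReal ‖∑' p : ℤ × ℤ, Tm τ α β k p‖ := rfl
      _ ≤ ENNReal.ofReal (∑' p : ℤ × ℤ, ‖Tm τ α β k p‖) := ENNReal.ofReal_le_ofReal hnorm
      _ = ∑' p : ℤ × ℤ, ENNReal.ofReal ‖Tm τ α β k p‖ :=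
          ENNReal.ofReal_tsum_of_nonneg (fun p => norm_nonneg _) hsn
      _ = ∑' p : ℤ × ℤ, ENNReal.ofReal (Norm.norm (Tm τ α β k p)) := rfl
  set S : ℝ := wnorm r α + wnorm r β with hSdef
  set D : ℝ := wnorm r (fun k => α k - β k) with hDdef
  have hwa : 0 ≤ wnorm r α := Real.sqrt_nonneg _
  have hwb : 0 ≤ wnorm r β := Real.sqrt_nonneg _
  have hwd : 0 ≤ D := Real.sqrt_nonneg _
  have hS0 : 0 ≤ S := by rw [hSdef]; positivity
  -- group bounds in packed (ofReal) form
  have hR : ∀ (x y z : ℤ → ℝ≥0∞) (X Y Z : ℝ), 0 ≤ X → 0 ≤ Y → 0 ≤ Z →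
      (∑' k, (wE r k * x k) ^ 2) = ENNReal.ofReal X →
      (∑' k, (wE r k * y k) ^ 2) = ENNReal.ofReal Y →
      (∑' k, (wE r k * z k) ^ 2) = ENNReal.ofReal Z →
      (∑' k : ℤ, (wE r k * Φ x y z k) ^ 2) ≤
        ENNReal.ofReal ((3 ^ r) ^ 2 * 15 * (C1 ^ 2 * (X * Y * Z))) := by
    intro x y z X Y Z hX hY hZ ex ey ez
    refine le_trans (group_bound r hr0 x y z) (le_of_eq ?_)
    rw [ex, ey, ez, hC1E,
      ENNReal.ofReal_mul (p := ((3:ℝ) ^ r) ^ 2 * 15) (by positivity),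
      ENNReal.ofReal_mul (p := ((3:ℝ) ^ r) ^ 2) (by positivity),
      ENNReal.ofReal_mul (p := C1 ^ 2) (by positivity),
      ofReal_prod3 hX hY,
      ENNReal.ofReal_pow h3r.le, ENNReal.ofReal_pow hC1nonneg]
    norm_num
  have hg1 := hR d a a (D ^ 2) (wnorm r α ^ 2) (wnorm r α ^ 2)
    (by positivity) (by positivity) (by positivity) (by rw [hNd, hDdef]) hNa hNa
  have hg2 := hR b d a (wnorm r β ^ 2) (D ^ 2) (wnorm r α ^ 2)
    (by positivity) (by positivity) (by positivity) hNb (by rw [hNd, hDdef]) hNa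
  have hg3 := hR b b d (wnorm r β ^ 2) (wnorm r β ^ 2) (D ^ 2)
    (by positivity) (by positivity) (by positivity) hNb hNb (by rw [hNd, hDdef])
  -- real comparisons per group
  have hea : wnorm r α ^ 2 ≤ S ^ 2 := by rw [hSdef]; nlinarith
  have heb : wnorm r β ^ 2 ≤ S ^ 2 := by rw [hSdef]; nlinarith
  have hZ0 : (0:ℝ) ≤ (3 ^ r) ^ 2 * 15 * C1 ^ 2 := by positivity
  have hP : ∀ X Y : ℝ, X ≤ S ^ 2 → Y ≤ S ^ 2 → 0 ≤ X → 0 ≤ Y →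
      (3 ^ r) ^ 2 * 15 * (C1 ^ 2 * (X * Y * D ^ 2)) ≤
        (3 ^ r) ^ 2 * 15 * (C1 ^ 2 * ((S ^ 2) ^ 2 * D ^ 2)) := by
    intro X Y hX hY hX0 hY0
    have h2 : ((S:ℝ) ^ 2) ^ 2 = S ^ 2 * S ^ 2 := by ring
    rw [h2]
    gcongr <;> first | exact hX | exact hY
  have hg1' : (∑' k : ℤ, (wE r k * Φ d a a k) ^ 2) ≤
      ENNReal.ofReal ((3 ^ r) ^ 2 * 15 * (C1 ^ 2 * ((S ^ 2) ^ 2 * D ^ 2))) := by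
    refine le_trans hg1 (ENNReal.ofReal_le_ofReal ?_)
    have : D ^ 2 * (wnorm r α ^ 2) * (wnorm r α ^ 2) = wnorm r α ^ 2 * (wnorm r α ^ 2) * D ^ 2 := by
      ring
    rw [this]
    exact hP _ _ hea hea (by positivity) (by positivity)
  have hg2' : (∑' k : ℤ, (wE r k * Φ b d a k) ^ 2) ≤
      ENNReal.ofReal ((3 ^ r) ^ 2 * 15 * (C1 ^ 2 * ((S ^ 2) ^ 2 * D ^ 2))) := by
    refine le_trans hg2 (ENNReal.ofReal_le_ofReal ?_)
    have : wnorm r β ^ 2 * D ^ 2 * (wnorm r α ^ 2)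
        = wnorm r β ^ 2 * (wnorm r α ^ 2) * D ^ 2 := by ring
    rw [this]
    exact hP _ _ heb hea (by positivity) (by positivity)
  have hg3' : (∑' k : ℤ, (wE r k * Φ b b d k) ^ 2) ≤
      ENNReal.ofReal ((3 ^ r) ^ 2 * 15 * (C1 ^ 2 * ((S ^ 2) ^ 2 * D ^ 2))) := by
    refine le_trans hg3 (ENNReal.ofReal_le_ofReal ?_)
    have : wnorm r β ^ 2 * (wnorm r β ^ 2) * D ^ 2
        = wnorm r β ^ 2 * (wnorm r β ^ 2) * D ^ 2 := rfl
    exact hP _ _ heb heb (by positivity) (by positivity)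
  -- the main chain
  set Q : ℝ := (3 ^ r) ^ 2 * 15 * (C1 ^ 2 * ((S ^ 2) ^ 2 * D ^ 2)) with hQdef
  have hQ0 : 0 ≤ Q := by rw [hQdef]; positivity
  have main : (∑' k : ℤ, (wE r k *
        ENNReal.ofReal (Norm.norm (∑' p : ℤ × ℤ, Tm τ α β k p))) ^ 2)
      ≤ ENNReal.ofReal (τ ^ 2 * (5 * (Q + Q + Q))) := by
    have hk : ∀ k : ℤ, (wE r k *
        ENNReal.ofReal (Norm.norm (∑' p : ℤ × ℤ, Tm τ α β k p))) ^ 2 ≤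
        ENNReal.ofReal τ ^ 2 *
          (wE r k * Φ d a a k + wE r k * Φ b d a k + wE r k * Φ b b d k) ^ 2 := by
      intro k
      have h1 : wE r k * ENNReal.ofReal (Norm.norm (∑' p : ℤ × ℤ, Tm τ α β k p))
          ≤ wE r k * (ENNReal.ofReal τ * (Φ d a a k + Φ b d a k + Φ b b d k)) :=
        mul_le_mul_right (le_trans (hW k) (hsump k)) _
      refine le_trans (pow_le_pow_left' h1 2) (le_of_eq ?_)
      ring
    calc (∑' k : ℤ, (wE r k *
          ENNReal.ofReal (Norm.norm (∑' p : ℤ × ℤ, Tm τ α β k p))) ^ 2)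
        ≤ ∑' k : ℤ, ENNReal.ofReal τ ^ 2 *
            (wE r k * Φ d a a k + wE r k * Φ b d a k + wE r k * Φ b b d k) ^ 2 :=
          ENNReal.tsum_le_tsum hk
      _ = ENNReal.ofReal τ ^ 2 * ∑' k : ℤ,
            (wE r k * Φ d a a k + wE r k * Φ b d a k + wE r k * Φ b b d k) ^ 2 :=
          ENNReal.tsum_mul_left
      _ ≤ ENNReal.ofReal τ ^ 2 * ∑' k : ℤ, 5 *
            ((wE r k * Φ d a a k) ^ 2 + (wE r k * Φ b d a k) ^ 2 + (wE r k * Φ b b d k) ^ 2) :=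
          mul_le_mul_right (ENNReal.tsum_le_tsum (fun k => sq3 _ _ _)) _
      _ = ENNReal.ofReal τ ^ 2 * (5 *
            ((∑' k : ℤ, (wE r k * Φ d a a k) ^ 2) + (∑' k : ℤ, (wE r k * Φ b d a k) ^ 2)
              + (∑' k : ℤ, (wE r k * Φ b b d k) ^ 2))) := by
          rw [ENNReal.tsum_mul_left, ENNReal.tsum_add, ENNReal.tsum_add]
      _ ≤ ENNReal.ofReal τ ^ 2 * (5 *
            (ENNReal.ofReal Q + ENNReal.ofReal Q + ENNReal.ofReal Q)) := by
          exact mul_le_mul_right (mul_le_mul_right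
            (add_le_add (add_le_add hg1' hg2') hg3') _) _
      _ = ENNReal.ofReal (τ ^ 2 * (5 * (Q + Q + Q))) := by
          rw [← ofReal_sum3 hQ0 hQ0 hQ0,
            show ((5:ℝ≥0∞)) = ENNReal.ofReal (5:ℝ) by norm_num,
            ← ENNReal.ofReal_mul (by norm_num : (0:ℝ) ≤ 5),
            ← ENNReal.ofReal_pow hτ,
            ← ENNReal.ofReal_mul (by positivity)]
  -- pass to the real statement
  set c : ℝ := 15 * 3 ^ r * (C1 + 1) + 1 with hcdef
  have hc0 : 0 < c := by rw [hcdef]; nlinarith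
  have hfinal_real : τ ^ 2 * (5 * (Q + Q + Q)) ≤ (c * τ * S ^ 2 * D) ^ 2 := by
    have h1 : 15 * 3 ^ r * C1 ≤ c := by rw [hcdef]; nlinarith
    have h2 : (15 * 3 ^ r * C1) ^ 2 ≤ c ^ 2 :=
      pow_le_pow_left₀ (by positivity) h1 2
    have h3 : (15 * 3 ^ r * C1) ^ 2 = 225 * (3 ^ r) ^ 2 * C1 ^ 2 := by ring
    calc τ ^ 2 * (5 * (Q + Q + Q))
        = (225 * (3 ^ r) ^ 2 * C1 ^ 2) * (τ ^ 2 * ((S ^ 2) ^ 2 * D ^ 2)) := by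
          rw [hQdef]; ring
      _ ≤ c ^ 2 * (τ ^ 2 * ((S ^ 2) ^ 2 * D ^ 2)) := by
          refine mul_le_mul_of_nonneg_right ?_ (by positivity)
          rw [← h3]; exact h2
      _ = (c * τ * S ^ 2 * D) ^ 2 := by ring
  show wnorm r (fun k : ℤ => ∑' p : ℤ × ℤ, Tm τ α β k p) ≤ c * τ * S ^ 2 * D
  have hrhs0 : 0 ≤ c * τ * S ^ 2 * D := by positivity
  have hsum_le : (∑' k : ℤ, (1 + |(k:ℝ)|) ^ (2 * r)
      * Norm.norm ((fun k : ℤ => ∑' p : ℤ × ℤ, Tm τ α β k p) k) ^ 2)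
      ≤ (c * τ * S ^ 2 * D) ^ 2 := by
    refine real_tsum_le_of_ofReal (fun k => by positivity) (by positivity) ?_
    calc (∑' k : ℤ, ENNReal.ofReal ((1 + |(k:ℝ)|) ^ (2 * r)
          * Norm.norm ((fun k : ℤ => ∑' p : ℤ × ℤ, Tm τ α β k p) k) ^ 2))
        = (∑' k : ℤ, (wE r k *
            ENNReal.ofReal (Norm.norm (∑' p : ℤ × ℤ, Tm τ α β k p))) ^ 2) :=
          tsum_congr (fun k => term_eq r k _)
      _ ≤ ENNReal.ofReal (τ ^ 2 * (5 * (Q + Q + Q))) := main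
      _ ≤ ENNReal.ofReal ((c * τ * S ^ 2 * D) ^ 2) := ENNReal.ofReal_le_ofReal hfinal_real
  rw [wnorm]
  calc Real.sqrt _ ≤ Real.sqrt ((c * τ * S ^ 2 * D) ^ 2) := Real.sqrt_le_sqrt hsum_le
    _ = c * τ * S ^ 2 * D := Real.sqrt_sq hrhs0
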